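/- arXiv:1511.05410 — 2 statements merged into one kernel-verified Lean document; each statement's English description precedes it below -/
import Mathlib

section
/- Let h > 0 and c > 0 be real constants. The function f(μ, b) = (μ / h) · (exp(c · b / μ) − 1) is jointly convex on the set {(μ, b) ∈ ℝ × ℝ : μ > 0 and b ≥ 0}; formally, ConvexOn ℝ {p : ℝ × ℝ | 0 < p.1 ∧ 0 ≤ p.2} (fun p => (p.1 / h) * (Real.exp (c * p.2 / p.1) - 1)). -/
theorem transformed_power_summand_convex (h c : ℝ) (hh : 0 < h) (hc : 0 < c) :
    ConvexOn ℝ {p : ℝ × ℝ | 0 < p.1 ∧ 0 ≤ p.2}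
      (fun p => (p.1 / h) * (Real.exp (c * p.2 / p.1) - 1)) := by
  constructor
  · have hset : {p : ℝ × ℝ | 0 < p.1 ∧ 0 ≤ p.2} = Set.Ioi (0:ℝ) ×ˢ Set.Ici (0:ℝ) := rfl
    rw [hset]
    exact (convex_Ioi 0).prod (convex_Ici 0)
  · rintro ⟨μ₁, b₁⟩ ⟨hμ₁, hb₁⟩ ⟨μ₂, b₂⟩ ⟨hμ₂, hb₂⟩ a b ha hb hab
    simp only [Prod.smul_mk, Prod.mk_add_mk, smul_eq_mul]
    have hspos : 0 < a * μ₁ + b * μ₂ := by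
      rcases lt_or_eq_of_le ha with ha' | ha'
      · nlinarith [mul_nonneg hb hμ₂.le, mul_pos ha' hμ₁]
      · nlinarith [mul_pos (show (0:ℝ) < b by linarith) hμ₂]
    set s := a * μ₁ + b * μ₂ with hsdef
    set l := a * μ₁ / s with hldef
    have hl0 : 0 ≤ l := by positivity
    have hl1 : l ≤ 1 := by
      rw [hldef, div_le_one hspos]
      nlinarith [mul_nonneg hb hμ₂.le]
    have hl1' : (0:ℝ) ≤ 1 - l := by linarith
    have hsum : l + (1 - l) = 1 := by ring
    have key := convexOn_exp.2 (Set.mem_univ (c * b₁ / μ₁)) (Set.mem_univ (c * b₂ / μ₂))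
      hl0 hl1' hsum
    simp only [smul_eq_mul] at key
    have hargeq : c * (a * b₁ + b * b₂) / s
        = l * (c * b₁ / μ₁) + (1 - l) * (c * b₂ / μ₂) := by
      rw [hldef]
      field_simp
      ring
    rw [hargeq]
    have hE₁ := Real.exp_pos (c * b₁ / μ₁)
    have hE₂ := Real.exp_pos (c * b₂ / μ₂)
    calc s / h * (Real.exp (l * (c * b₁ / μ₁) + (1 - l) * (c * b₂ / μ₂)) - 1)
        ≤ s / h * (l * Real.exp (c * b₁ / μ₁) + (1 - l) * Real.exp (c * b₂ / μ₂) - 1) := by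
          have hsh : 0 ≤ s / h := by positivity
          exact mul_le_mul_of_nonneg_left (by linarith) hsh
      _ = a * (μ₁ / h * (Real.exp (c * b₁ / μ₁) - 1))
            + b * (μ₂ / h * (Real.exp (c * b₂ / μ₂) - 1)) := by
          rw [hldef]
          field_simp
          ring
end

section
/- Let ι be a finite index set, let h : ι → ℝ satisfy h j > 0 for all j, let c > 0 and P be real constants. Then the set {(μ, b) ∈ (ι → ℝ) × (ι → ℝ) : (∀ j, 0 < μ j ∧ 0 ≤ b j) ∧ ∑_{j ∈ ι} (μ j / h j) · (exp(c · b j / μ j) − 1) ≤ P} is a convex subset of (ι → ℝ) × (ι → ℝ). -/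
lemma combo_pos {a b x y : ℝ} (ha : 0 ≤ a) (hb : 0 ≤ b) (hab : a + b = 1)
    (hx : 0 < x) (hy : 0 < y) : 0 < a * x + b * y := by
  rcases ha.lt_or_eq with h' | h'
  · exact add_pos_of_pos_of_nonneg (mul_pos h' hx) (mul_nonneg hb hy.le)
  · have hb1 : b = 1 := by linarith
    simp [← h', hb1, hy]

lemma perspective_exp_ineq (c : ℝ) {a b μ1 μ2 : ℝ} (b1 b2 : ℝ)
    (hμ1 : 0 < μ1) (hμ2 : 0 < μ2) (ha : 0 ≤ a) (hb : 0 ≤ b) (hab : a + b = 1) :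
    (a * μ1 + b * μ2) * (Real.exp (c * (a * b1 + b * b2) / (a * μ1 + b * μ2)) - 1) ≤
      a * (μ1 * (Real.exp (c * b1 / μ1) - 1)) + b * (μ2 * (Real.exp (c * b2 / μ2) - 1)) := by
  set s : ℝ := a * μ1 + b * μ2 with hs
  have hspos : 0 < s := combo_pos ha hb hab hμ1 hμ2
  have hw1 : 0 ≤ a * μ1 / s := by positivity
  have hw2 : 0 ≤ b * μ2 / s := by positivity
  have hwsum : a * μ1 / s + b * μ2 / s = 1 := by field_simp; exact hs.symm
  have key := convexOn_exp.2 (Set.mem_univ (c * b1 / μ1)) (Set.mem_univ (c * b2 / μ2))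
      hw1 hw2 hwsum
  have harg : (a * μ1 / s) • (c * b1 / μ1) + (b * μ2 / s) • (c * b2 / μ2)
      = c * (a * b1 + b * b2) / s := by
    field_simp
    have e1 : μ1 * μ1⁻¹ = 1 := mul_inv_cancel₀ hμ1.ne'
    have e2 : μ2 * μ2⁻¹ = 1 := mul_inv_cancel₀ hμ2.ne'
    have e3 : s * s⁻¹ = 1 := mul_inv_cancel₀ hspos.ne'
    linear_combination (c * b1 * a * s * s⁻¹) * e1 + (c * b1 * a) * e3 +
      (c * b2 * b * s * s⁻¹) * e2 + (c * b2 * b) * e3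
  rw [harg] at key
  have hmul := mul_le_mul_of_nonneg_left key hspos.le
  have h1 : s * ((a * μ1 / s) * Real.exp (c * b1 / μ1) + (b * μ2 / s) * Real.exp (c * b2 / μ2))
      = a * μ1 * Real.exp (c * b1 / μ1) + b * μ2 * Real.exp (c * b2 / μ2) := by
    field_simp
  simp only [smul_eq_mul] at hmul
  rw [h1] at hmul
  nlinarith [hmul]

theorem transformed_power_constraint_convex
    {ι : Type*} [Fintype ι] (h : ι → ℝ) (hh : ∀ j, 0 < h j) (c P : ℝ) (hc : 0 < c) :
    Convex ℝ {p : (ι → ℝ) × (ι → ℝ) |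
      (∀ j, 0 < p.1 j ∧ 0 ≤ p.2 j) ∧
      ∑ j, (p.1 j / h j) * (Real.exp (c * p.2 j / p.1 j) - 1) ≤ P} := by
  rintro ⟨μ1, b1⟩ ⟨hpos1, hsum1⟩ ⟨μ2, b2⟩ ⟨hpos2, hsum2⟩ a b ha hb hab
  simp only [Set.mem_setOf_eq] at hpos1 hpos2 hsum1 hsum2 ⊢
  constructor
  · intro j
    constructor
    · simpa using combo_pos ha hb hab (hpos1 j).1 (hpos2 j).1
    · have := (hpos1 j).2; have := (hpos2 j).2
      simp only [Prod.smul_snd, Prod.snd_add, Pi.add_apply, Pi.smul_apply, smul_eq_mul]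
      positivity
  · simp only [Prod.smul_fst, Prod.smul_snd, Prod.fst_add, Prod.snd_add, Pi.add_apply,
      Pi.smul_apply, smul_eq_mul]
    have step : ∀ j, (a * μ1 j + b * μ2 j) / h j *
        (Real.exp (c * (a * b1 j + b * b2 j) / (a * μ1 j + b * μ2 j)) - 1) ≤
        a * (μ1 j / h j * (Real.exp (c * b1 j / μ1 j) - 1)) +
        b * (μ2 j / h j * (Real.exp (c * b2 j / μ2 j) - 1)) := by
      intro j
      have key := perspective_exp_ineq c (b1 j) (b2 j) (hpos1 j).1 (hpos2 j).1 ha hb hab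
      have hhj := hh j
      calc (a * μ1 j + b * μ2 j) / h j *
            (Real.exp (c * (a * b1 j + b * b2 j) / (a * μ1 j + b * μ2 j)) - 1)
          = ((a * μ1 j + b * μ2 j) *
            (Real.exp (c * (a * b1 j + b * b2 j) / (a * μ1 j + b * μ2 j)) - 1)) / h j := by
            ring
        _ ≤ (a * (μ1 j * (Real.exp (c * b1 j / μ1 j) - 1)) +
             b * (μ2 j * (Real.exp (c * b2 j / μ2 j) - 1))) / h j := by
            exact div_le_div_of_nonneg_right key hhj.le |>.trans_eq rfl
        _ = a * (μ1 j / h j * (Real.exp (c * b1 j / μ1 j) - 1)) +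
            b * (μ2 j / h j * (Real.exp (c * b2 j / μ2 j) - 1)) := by
            field_simp
    calc ∑ j, (a * μ1 j + b * μ2 j) / h j *
          (Real.exp (c * (a * b1 j + b * b2 j) / (a * μ1 j + b * μ2 j)) - 1)
        ≤ ∑ j, (a * (μ1 j / h j * (Real.exp (c * b1 j / μ1 j) - 1)) +
            b * (μ2 j / h j * (Real.exp (c * b2 j / μ2 j) - 1))) :=
          Finset.sum_le_sum fun j _ => step j
      _ = a * ∑ j, μ1 j / h j * (Real.exp (c * b1 j / μ1 j) - 1) +
          b * ∑ j, μ2 j / h j * (Real.exp (c * b2 j / μ2 j) - 1) := by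
          rw [Finset.sum_add_distrib, Finset.mul_sum, Finset.mul_sum]
      _ ≤ a * P + b * P := by
          have h1 := mul_le_mul_of_nonneg_left hsum1 ha
          have h2 := mul_le_mul_of_nonneg_left hsum2 hb
          linarith
      _ = P := by rw [← add_mul, hab, one_mul]
end
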